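/- Let (g, ρ, V, 𝒱, B₀) be a standard pentad with B₀ symmetric. Then there exists a non-degenerate symmetric invariant bilinear form B_L on the associated graded Lie algebra L(g,ρ,V,𝒱,B₀) = ⊕_{n∈ℤ} V_n such that B_L restricted to V₀ × V₀ equals B₀, B_L(v, φ) = φ(v) for v ∈ V₁ = V and φ ∈ V_{-1} = 𝒱, and B_L(V_n, V_m) = 0 whenever n + m ≠ 0. -/

import Mathlib

/-- A **standard pentad** `(g, ρ, V, 𝒱, B₀)` in the abstract-dual formulation: a Lie algebra
`g` with a non-degenerate invariant bilinear form `B`, representations `ρ` on `V` and `ϱ`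
on `W` (with `W` playing the role of the `g`-submodule `𝒱 ⊆ Hom(V, k)`, realized via the
non-degenerate pairing `pair`, so that `ϱ` is the canonical dual action), together with a
Φ-map `Φ`. -/
structure PentadStruct (k g V W : Type*) [Field k] [LieRing g] [LieAlgebra k g]
    [AddCommGroup V] [Module k V] [AddCommGroup W] [Module k W] where
  ρ : g →ₗ[k] V →ₗ[k] V
  rep_ρ : ∀ a b : g, ρ ⁅a, b⁆ = ρ a ∘ₗ ρ b - ρ b ∘ₗ ρ a
  ϱ : g →ₗ[k] W →ₗ[k] W
  rep_ϱ : ∀ a b : g, ϱ ⁅a, b⁆ = ϱ a ∘ₗ ϱ b - ϱ b ∘ₗ ϱ a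
  pair : V →ₗ[k] W →ₗ[k] k
  pair_compat : ∀ (a : g) (v : V) (w : W), pair (ρ a v) w = - pair v (ϱ a w)
  pair_nondeg_left : ∀ v : V, (∀ w : W, pair v w = 0) → v = 0
  pair_nondeg_right : ∀ w : W, (∀ v : V, pair v w = 0) → w = 0
  B : g →ₗ[k] g →ₗ[k] k
  B_nondeg_left : ∀ a : g, (∀ b : g, B a b = 0) → a = 0
  B_nondeg_right : ∀ b : g, (∀ a : g, B a b = 0) → b = 0
  B_invariant : ∀ a b c : g, B ⁅a, b⁆ c = B a ⁅b, c⁆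
  Φ : V →ₗ[k] W →ₗ[k] g
  Φ_compat : ∀ (a : g) (v : V) (w : W), B a (Φ v w) = pair (ρ a v) w

/-- The graded Lie algebra `L(g, ρ, V, 𝒱, B₀) = ⊕ₙ Vₙ` associated with a standard pentad,
characterized by its defining properties: it is ℤ-graded, its degrees `0`, `1`, `-1` are the
images of `g`, `V`, `𝒱` (compatibly with the Lie structures and the Φ-map), the higher graded
pieces satisfy `V_{i+1} = [V₁, V_i]`, `V_{-i-1} = [V₋₁, V₋ᵢ]` for `i ≥ 1`, and elements of
`Vₙ`, `|n| ≥ 2`, are by construction (as homomorphisms) determined by their brackets with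
`V_{∓1}`. -/
structure AssocGradedLieAlgebra (k g V W : Type*) [Field k] [LieRing g] [LieAlgebra k g]
    [AddCommGroup V] [Module k V] [AddCommGroup W] [Module k W]
    (P : PentadStruct k g V W) (L : Type*) [LieRing L] [LieAlgebra k L] where
  grading : ℤ → Submodule k L
  isInternal : DirectSum.IsInternal grading
  lie_mem : ∀ (n m : ℤ), ∀ x ∈ grading n, ∀ y ∈ grading m, ⁅x, y⁆ ∈ grading (n + m)
  ιg : g →ₗ[k] L
  ιV : V →ₗ[k] L
  ιW : W →ₗ[k] L
  ιg_inj : Function.Injective ιg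
  ιV_inj : Function.Injective ιV
  ιW_inj : Function.Injective ιW
  ιg_range : LinearMap.range ιg = grading 0
  ιV_range : LinearMap.range ιV = grading 1
  ιW_range : LinearMap.range ιW = grading (-1)
  ιg_lie : ∀ a b : g, ιg ⁅a, b⁆ = ⁅ιg a, ιg b⁆
  lie_ιV : ∀ (a : g) (v : V), ⁅ιg a, ιV v⁆ = ιV (P.ρ a v)
  lie_ιW : ∀ (a : g) (w : W), ⁅ιg a, ιW w⁆ = ιW (P.ϱ a w)
  lie_Φ : ∀ (v : V) (w : W), ⁅ιV v, ιW w⁆ = ιg (P.Φ v w)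
  span_pos : ∀ i : ℤ, 1 ≤ i → grading (i + 1)
    = Submodule.span k {z : L | ∃ x ∈ grading 1, ∃ y ∈ grading i, z = ⁅x, y⁆}
  span_neg : ∀ i : ℤ, 1 ≤ i → grading (-i - 1)
    = Submodule.span k {z : L | ∃ x ∈ grading (-1), ∃ y ∈ grading (-i), z = ⁅x, y⁆}
  trans_pos : ∀ n : ℤ, 2 ≤ n → ∀ x ∈ grading n, (∀ y ∈ grading (-1), ⁅x, y⁆ = 0) → x = 0
  trans_neg : ∀ n : ℤ, 2 ≤ n → ∀ x ∈ grading (-n), (∀ y ∈ grading 1, ⁅x, y⁆ = 0) → x = 0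

namespace S8

open scoped TensorProduct

variable {k g V W L : Type*} [Field k] [LieRing g] [LieAlgebra k g]
    [AddCommGroup V] [Module k V] [AddCommGroup W] [Module k W]
    [LieRing L] [LieAlgebra k L]
    {P : PentadStruct k g V W}
    (A : AssocGradedLieAlgebra k g V W P L)

noncomputable def D : DirectSum ℤ (fun n => ↥(A.grading n)) ≃ₗ[k] L :=
  LinearEquiv.ofBijective (DirectSum.coeLinearMap A.grading) A.isInternal

noncomputable def π (n : ℤ) : L →ₗ[k] A.grading n :=
  (DirectSum.component k ℤ (fun i => ↥(A.grading i)) n).comp (D A).symm.toLinearMap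

noncomputable def p (n : ℤ) : L →ₗ[k] L := (A.grading n).subtype.comp (π A n)

lemma p_eq_self {n : ℤ} {x : L} (hx : x ∈ A.grading n) : p A n x = x := by
  have h := A.isInternal.ofBijective_coeLinearMap_of_mem hx
  simp only [p, π, LinearMap.comp_apply, LinearEquiv.coe_coe, Submodule.coe_subtype]
  exact congrArg Subtype.val h

lemma p_eq_zero {n m : ℤ} (hnm : m ≠ n) {x : L} (hx : x ∈ A.grading m) : p A n x = 0 := by
  have h := A.isInternal.ofBijective_coeLinearMap_of_mem_ne hnm hx
  simp only [p, π, LinearMap.comp_apply, LinearEquiv.coe_coe, Submodule.coe_subtype]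
  exact congrArg Subtype.val h

lemma p_mem (n : ℤ) (x : L) : p A n x ∈ A.grading n := (π A n x).2

lemma top_eq_iSup : (⊤ : Submodule k L) = ⨆ n, A.grading n :=
  (A.isInternal.submodule_iSup_eq_top).symm

/-- Induction over homogeneous components. -/
lemma homog_induction {C : L → Prop} (h0 : C 0)
    (hadd : ∀ x y, C x → C y → C (x + y))
    (hmem : ∀ (n : ℤ), ∀ x ∈ A.grading n, C x) (x : L) : C x := by
  have hx : x ∈ (⊤ : Submodule k L) := trivial
  rw [top_eq_iSup A] at hx
  exact Submodule.iSup_induction (motive := C) _ hx hmem h0 hadd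

lemma p_lie_left {d : ℤ} {c : L} (hc : c ∈ A.grading d) (m : ℤ) (z : L) :
    p A m ⁅c, z⁆ = ⁅c, p A (m - d) z⁆ := by
  induction z using homog_induction A with
  | h0 => simp
  | hadd x y hx hy => simp only [lie_add, map_add, hx, hy]
  | hmem j x hx =>
    rcases eq_or_ne (d + j) m with h | h
    · rw [p_eq_self A (h ▸ A.lie_mem d j c hc x hx),
        p_eq_self A (show x ∈ A.grading (m - d) by rw [← h]; simpa using hx)]
    · rw [p_eq_zero A (Ne.symm (h ∘ ?_)) (A.lie_mem d j c hc x hx),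
        p_eq_zero A ?_ hx, lie_zero]
      · intro hh; omega
      · omega

lemma p_lie_right {d : ℤ} {c : L} (hc : c ∈ A.grading d) (m : ℤ) (z : L) :
    p A m ⁅z, c⁆ = ⁅p A (m - d) z, c⁆ := by
  rw [show ⁅z, c⁆ = -⁅c, z⁆ from by rw [lie_skew]]
  rw [map_neg, p_lie_left A hc, ← lie_skew, neg_neg]

noncomputable def e0 : g ≃ₗ[k] ↥(A.grading 0) :=
  LinearEquiv.ofBijective (A.ιg.codRestrict (A.grading 0)
      (fun x => A.ιg_range ▸ LinearMap.mem_range_self _ x))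
    ⟨fun a b h => A.ιg_inj (congrArg Subtype.val h), fun y => by
      have : (y : L) ∈ LinearMap.range A.ιg := by rw [A.ιg_range]; exact y.2
      obtain ⟨a, ha⟩ := this
      exact ⟨a, Subtype.ext ha⟩⟩

noncomputable def e1 : V ≃ₗ[k] ↥(A.grading 1) :=
  LinearEquiv.ofBijective (A.ιV.codRestrict (A.grading 1)
      (fun x => A.ιV_range ▸ LinearMap.mem_range_self _ x))
    ⟨fun a b h => A.ιV_inj (congrArg Subtype.val h), fun y => by
      have : (y : L) ∈ LinearMap.range A.ιV := by rw [A.ιV_range]; exact y.2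
      obtain ⟨a, ha⟩ := this
      exact ⟨a, Subtype.ext ha⟩⟩

noncomputable def em : W ≃ₗ[k] ↥(A.grading (-1)) :=
  LinearEquiv.ofBijective (A.ιW.codRestrict (A.grading (-1))
      (fun x => A.ιW_range ▸ LinearMap.mem_range_self _ x))
    ⟨fun a b h => A.ιW_inj (congrArg Subtype.val h), fun y => by
      have : (y : L) ∈ LinearMap.range A.ιW := by rw [A.ιW_range]; exact y.2
      obtain ⟨a, ha⟩ := this
      exact ⟨a, Subtype.ext ha⟩⟩

@[simp] lemma e0_symm_ιg (a : g) (h) : (e0 A).symm ⟨A.ιg a, h⟩ = a := by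
  have : (e0 A) a = ⟨A.ιg a, h⟩ := rfl
  rw [← this, LinearEquiv.symm_apply_apply]

@[simp] lemma ιg_e0_symm (x : ↥(A.grading 0)) : A.ιg ((e0 A).symm x) = x :=
  congrArg Subtype.val ((e0 A).apply_symm_apply x)

@[simp] lemma e1_symm_ιV (v : V) (h) : (e1 A).symm ⟨A.ιV v, h⟩ = v := by
  have : (e1 A) v = ⟨A.ιV v, h⟩ := rfl
  rw [← this, LinearEquiv.symm_apply_apply]

@[simp] lemma ιV_e1_symm (x : ↥(A.grading 1)) : A.ιV ((e1 A).symm x) = x :=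
  congrArg Subtype.val ((e1 A).apply_symm_apply x)

@[simp] lemma em_symm_ιW (w : W) (h) : (em A).symm ⟨A.ιW w, h⟩ = w := by
  have : (em A) w = ⟨A.ιW w, h⟩ := rfl
  rw [← this, LinearEquiv.symm_apply_apply]

@[simp] lemma ιW_em_symm (x : ↥(A.grading (-1))) : A.ιW ((em A).symm x) = x :=
  congrArg Subtype.val ((em A).apply_symm_apply x)

/-- `L →ₗ g` : extract degree-0 component. -/
noncomputable def f0 : L →ₗ[k] g := (e0 A).symm.toLinearMap.comp (π A 0)
noncomputable def f1 : L →ₗ[k] V := (e1 A).symm.toLinearMap.comp (π A 1)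
noncomputable def fm : L →ₗ[k] W := (em A).symm.toLinearMap.comp (π A (-1))

lemma ιg_f0 (x : L) : A.ιg (f0 A x) = p A 0 x := ιg_e0_symm A _
lemma ιV_f1 (x : L) : A.ιV (f1 A x) = p A 1 x := ιV_e1_symm A _
lemma ιW_fm (x : L) : A.ιW (fm A x) = p A (-1) x := ιW_em_symm A _

@[simp] lemma f0_ιg (a : g) : f0 A (A.ιg a) = a := by
  apply A.ιg_inj; rw [ιg_f0]
  exact p_eq_self A (A.ιg_range ▸ LinearMap.mem_range_self _ a)

@[simp] lemma f1_ιV (v : V) : f1 A (A.ιV v) = v := by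
  apply A.ιV_inj; rw [ιV_f1]
  exact p_eq_self A (A.ιV_range ▸ LinearMap.mem_range_self _ v)

@[simp] lemma fm_ιW (w : W) : fm A (A.ιW w) = w := by
  apply A.ιW_inj; rw [ιW_fm]
  exact p_eq_self A (A.ιW_range ▸ LinearMap.mem_range_self _ w)

/-- level-0 form. -/
noncomputable def lo0 : L →ₗ[k] L →ₗ[k] k := (P.B.comp (f0 A)).compl₂ (f0 A)
/-- level-1 form. -/
noncomputable def hi1 : L →ₗ[k] L →ₗ[k] k := (P.pair.comp (f1 A)).compl₂ (fm A)

lemma lo0_apply (x z : L) : lo0 A x z = P.B (f0 A x) (f0 A z) := rfl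
lemma hi1_apply (x z : L) : hi1 A x z = P.pair (f1 A x) (fm A z) := rfl


lemma p_idem (n : ℤ) (x : L) : p A n (p A n x) = p A n x := p_eq_self A (p_mem A n x)

lemma π_congr {n : ℤ} {x y : L} (h : p A n x = p A n y) : π A n x = π A n y :=
  Subtype.ext h

@[simp] lemma f0_p (z : L) : f0 A (p A 0 z) = f0 A z := by
  apply A.ιg_inj; rw [ιg_f0, ιg_f0, p_idem]

@[simp] lemma f1_p (z : L) : f1 A (p A 1 z) = f1 A z := by
  apply A.ιV_inj; rw [ιV_f1, ιV_f1, p_idem]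

@[simp] lemma fm_p (z : L) : fm A (p A (-1) z) = fm A z := by
  apply A.ιW_inj; rw [ιW_fm, ιW_fm, p_idem]

lemma mem_g0 {c : L} (hc : c ∈ A.grading 0) : A.ιg (f0 A c) = c := by
  rw [ιg_f0, p_eq_self A hc]

lemma mem_g1 {v : L} (hv : v ∈ A.grading 1) : A.ιV (f1 A v) = v := by
  rw [ιV_f1, p_eq_self A hv]

lemma mem_gm {φ : L} (hφ : φ ∈ A.grading (-1)) : A.ιW (fm A φ) = φ := by
  rw [ιW_fm, p_eq_self A hφ]

/- component computations of brackets with degree 0, ±1 elements -/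

lemma f0_lie_g {c : L} (hc : c ∈ A.grading 0) (z : L) :
    f0 A ⁅c, z⁆ = ⁅f0 A c, f0 A z⁆ := by
  apply A.ιg_inj
  rw [ιg_f0, A.ιg_lie, p_lie_left A hc, mem_g0 A hc, ιg_f0]
  norm_num

lemma f1_lie_g {c : L} (hc : c ∈ A.grading 0) (z : L) :
    f1 A ⁅c, z⁆ = P.ρ (f0 A c) (f1 A z) := by
  apply A.ιV_inj
  rw [ιV_f1, ← A.lie_ιV, p_lie_left A hc, mem_g0 A hc, ιV_f1]
  norm_num

lemma fm_lie_g {c : L} (hc : c ∈ A.grading 0) (z : L) :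
    fm A ⁅c, z⁆ = P.ϱ (f0 A c) (fm A z) := by
  apply A.ιW_inj
  rw [ιW_fm, ← A.lie_ιW, p_lie_left A hc, mem_g0 A hc, ιW_fm]
  norm_num

lemma fm_lie_m {φ : L} (hφ : φ ∈ A.grading (-1)) (z : L) :
    fm A ⁅φ, z⁆ = - P.ϱ (f0 A z) (fm A φ) := by
  apply A.ιW_inj
  rw [ιW_fm, map_neg, ← A.lie_ιW, p_lie_left A hφ, mem_gm A hφ]
  rw [show (-1 : ℤ) - -1 = 0 from by norm_num, ← ιg_f0]
  rw [← lie_skew]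

lemma f0_lie_xm {φ : L} (hφ : φ ∈ A.grading (-1)) (x : L) :
    f0 A ⁅x, φ⁆ = P.Φ (f1 A x) (fm A φ) := by
  apply A.ιg_inj
  rw [ιg_f0, ← A.lie_Φ, p_lie_right A hφ, mem_gm A hφ]
  rw [show (0 : ℤ) - -1 = 1 from by norm_num, ← ιV_f1]

lemma f1_lie_v {v : L} (hv : v ∈ A.grading 1) (x : L) :
    f1 A ⁅v, x⁆ = - P.ρ (f0 A x) (f1 A v) := by
  apply A.ιV_inj
  rw [ιV_f1, map_neg, ← A.lie_ιV, p_lie_left A hv, mem_g1 A hv]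
  rw [show (1 : ℤ) - 1 = 0 from by norm_num, ← ιg_f0]
  rw [← lie_skew]

lemma f0_lie_yv {v : L} (hv : v ∈ A.grading 1) (y : L) :
    f0 A ⁅y, v⁆ = - P.Φ (f1 A v) (fm A y) := by
  apply A.ιg_inj
  rw [ιg_f0, map_neg, ← A.lie_Φ, p_lie_right A hv, mem_g1 A hv]
  rw [show (0 : ℤ) - 1 = -1 from by norm_num, ← ιW_fm]
  rw [← lie_skew]

/-- The bundle of data at stage `n`: the pairing forms of levels `n` (`lo`, pairing
`V_n` with `V_{-n}`) and `n+1` (`hi`), together with their key properties. -/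
structure Bundle (n : ℕ) where
  lo : L →ₗ[k] L →ₗ[k] k
  hi : L →ₗ[k] L →ₗ[k] k
  lo_suppl : ∀ x z, lo (p A (n : ℤ) x) z = lo x z
  lo_suppr : ∀ x z, lo x (p A (-(n : ℤ)) z) = lo x z
  hi_suppl : ∀ x z, hi (p A ((n : ℤ) + 1) x) z = hi x z
  hi_suppr : ∀ x z, hi x (p A (-((n : ℤ) + 1)) z) = hi x z
  lo_g : ∀ c ∈ A.grading 0, ∀ x z, lo x ⁅c, z⁆ = - lo ⁅c, x⁆ z
  hi_g : ∀ c ∈ A.grading 0, ∀ x z, hi x ⁅c, z⁆ = - hi ⁅c, x⁆ z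
  hi_A : ∀ φ ∈ A.grading (-1), ∀ x z, hi x ⁅φ, z⁆ = lo ⁅x, φ⁆ z
  hi_D : ∀ v ∈ A.grading 1, ∀ x y, hi ⁅v, x⁆ y = lo x ⁅y, v⁆

variable (hBsymm : ∀ a b : g, P.B a b = P.B b a)

/-- The base bundle: levels 0 and 1. -/
noncomputable def bundle0 : Bundle A 0 where
  lo := lo0 A
  hi := hi1 A
  lo_suppl x z := by simp [lo0_apply]
  lo_suppr x z := by
    simp only [lo0_apply, Nat.cast_zero, neg_zero, f0_p]
  hi_suppl x z := by
    simp only [hi1_apply, Nat.cast_zero, zero_add, f1_p]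
  hi_suppr x z := by
    simp only [hi1_apply, Nat.cast_zero, zero_add, fm_p]
  lo_g c hc x z := by
    simp only [lo0_apply, f0_lie_g A hc]
    rw [show ⁅f0 A c, f0 A x⁆ = -⁅f0 A x, f0 A c⁆ from by rw [lie_skew], map_neg,
      LinearMap.neg_apply, neg_neg, P.B_invariant]
  hi_g c hc x z := by
    simp only [hi1_apply, fm_lie_g A hc, f1_lie_g A hc]
    rw [P.pair_compat, neg_neg]
  hi_A φ hφ x z := by
    simp only [hi1_apply, lo0_apply, fm_lie_m A hφ, f0_lie_xm A hφ, map_neg]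
    rw [hBsymm, P.Φ_compat, P.pair_compat]
  hi_D v hv x y := by
    simp only [hi1_apply, lo0_apply, f1_lie_v A hv, f0_lie_yv A hv, map_neg,
      LinearMap.neg_apply]
    rw [P.Φ_compat]


lemma grading_congr {a b : ℤ} (h : a = b) {x : L} (hx : x ∈ A.grading a) :
    x ∈ A.grading b := h ▸ hx

section Step

variable {n : ℕ} 

/-- right bracket multiplication -/
noncomputable def rmul (v : L) : L →ₗ[k] L := -(LieAlgebra.ad k L v)

@[simp] lemma rmul_apply (v w : L) : rmul (k := k) v w = ⁅w, v⁆ := by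
  simp only [rmul, LinearMap.neg_apply, LieAlgebra.ad_apply]
  rw [lie_skew]

/-- the bracket as a bilinear map `V₁ × V_{n+1} → L`. -/
noncomputable def brkt (n : ℕ) :
    ↥(A.grading 1) →ₗ[k] ↥(A.grading ((n : ℤ) + 1)) →ₗ[k] L :=
  LinearMap.mk₂ k (fun v u => ⁅(v : L), (u : L)⁆)
    (fun _ _ _ => by simp [add_lie]) (fun _ _ _ => by simp [smul_lie])
    (fun _ _ _ => by simp [lie_add]) (fun _ _ _ => by simp [lie_smul])

noncomputable def br' (n : ℕ) :
    (↥(A.grading 1) ⊗[k] ↥(A.grading ((n : ℤ) + 1))) →ₗ[k] L :=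
  TensorProduct.lift (brkt A n)

@[simp] lemma br'_tmul (v : ↥(A.grading 1)) (u : ↥(A.grading ((n : ℤ) + 1))) :
    br' A n (v ⊗ₜ u) = ⁅(v : L), (u : L)⁆ := rfl

/-- the candidate form, as a bilinear map on the tensor square. -/
noncomputable def Cmap (b : Bundle A n) :
    ↥(A.grading 1) →ₗ[k] ↥(A.grading ((n : ℤ) + 1)) →ₗ[k] (L →ₗ[k] k) :=
  LinearMap.mk₂ k (fun v u => (b.hi (u : L)).comp (rmul (v : L)))
    (fun _ _ _ => by ext w; simp [lie_add])
    (fun _ _ _ => by ext w; simp [lie_smul])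
    (fun _ _ _ => by ext w; simp)
    (fun _ _ _ => by ext w; simp)

@[simp] lemma Cmap_apply (b : Bundle A n) (v : ↥(A.grading 1))
    (u : ↥(A.grading ((n : ℤ) + 1))) (w : L) :
    Cmap A b v u w = b.hi (u : L) ⁅w, (v : L)⁆ := by
  simp [Cmap]

noncomputable def C' (b : Bundle A n) :
    (↥(A.grading 1) ⊗[k] ↥(A.grading ((n : ℤ) + 1))) →ₗ[k] (L →ₗ[k] k) :=
  TensorProduct.lift (Cmap A b)

@[simp] lemma C'_tmul (b : Bundle A n) (v : ↥(A.grading 1))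
    (u : ↥(A.grading ((n : ℤ) + 1))) (w : L) :
    C' A b (v ⊗ₜ u) w = b.hi (u : L) ⁅w, (v : L)⁆ := by
  simp [C', TensorProduct.lift.tmul]

lemma br'_mem (t : ↥(A.grading 1) ⊗[k] ↥(A.grading ((n : ℤ) + 1))) :
    br' A n t ∈ A.grading ((n : ℤ) + 2) := by
  induction t using TensorProduct.induction_on with
  | zero => simp only [map_zero]; exact zero_mem _
  | tmul v u =>
    rw [br'_tmul]
    exact grading_congr A (by ring) (A.lie_mem 1 ((n : ℤ) + 1) v v.2 u u.2)
  | add t t' ht ht' => rw [map_add]; exact add_mem ht ht'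

noncomputable def br'' (n : ℕ) :
    (↥(A.grading 1) ⊗[k] ↥(A.grading ((n : ℤ) + 1))) →ₗ[k] ↥(A.grading ((n : ℤ) + 2)) :=
  (br' A n).codRestrict _ (br'_mem A)

lemma br''_surj : Function.Surjective (br'' A n) := by
  rintro ⟨x, hx⟩
  have hx' : x ∈ Submodule.span k
      {z : L | ∃ a ∈ A.grading 1, ∃ y ∈ A.grading ((n : ℤ) + 1), z = ⁅a, y⁆} := by
    rw [← A.span_pos ((n : ℤ) + 1) (by omega)]
    exact grading_congr A (by ring) hx
  suffices h : ∃ t, br' A n t = x by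
    obtain ⟨t, ht⟩ := h; exact ⟨t, Subtype.ext ht⟩
  clear hx
  induction hx' using Submodule.span_induction with
  | mem x hx =>
    obtain ⟨v, hv, u, hu, rfl⟩ := hx
    exact ⟨⟨v, hv⟩ ⊗ₜ ⟨u, hu⟩, rfl⟩
  | zero => exact ⟨0, by simp⟩
  | add x y hx hy ihx ihy =>
    obtain ⟨t, ht⟩ := ihx; obtain ⟨t', ht'⟩ := ihy
    exact ⟨t + t', by rw [map_add, ht, ht']⟩
  | smul c x hx ihx =>
    obtain ⟨t, ht⟩ := ihx
    exact ⟨c • t, by rw [map_smul, ht]⟩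

lemma C'_vanish (b : Bundle A n) (t : ↥(A.grading 1) ⊗[k] ↥(A.grading ((n : ℤ) + 1)))
    {m : ℤ} (hm : m ≠ -((n : ℤ) + 2)) {w : L} (hw : w ∈ A.grading m) :
    C' A b t w = 0 := by
  induction t using TensorProduct.induction_on with
  | zero => simp
  | tmul v u =>
    rw [C'_tmul, ← b.hi_suppr,
      p_eq_zero A (show m + 1 ≠ -((n:ℤ)+1) by omega) (A.lie_mem m 1 w hw _ v.2), map_zero]
  | add t t' ht ht' => rw [map_add, LinearMap.add_apply, ht, ht', add_zero]

lemma C'_suppr (b : Bundle A n) (t : ↥(A.grading 1) ⊗[k] ↥(A.grading ((n : ℤ) + 1)))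
    (w : L) : C' A b t w = C' A b t (p A (-((n : ℤ) + 2)) w) := by
  induction w using homog_induction A with
  | h0 => simp
  | hadd x y hx hy => rw [map_add, map_add, map_add, hx, hy]
  | hmem m w hw =>
    rcases eq_or_ne m (-((n : ℤ) + 2)) with rfl | hm
    · rw [p_eq_self A hw]
    · rw [C'_vanish A b t hm hw, p_eq_zero A hm hw, map_zero]

/-- The key computation: on brackets `⁅φ, y⁆` with `φ ∈ V₋₁`, the candidate form only
depends on the bracket image. -/
lemma C'_key (b : Bundle A n) {φ : L} (hφ : φ ∈ A.grading (-1)) (y : L)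
    (t : ↥(A.grading 1) ⊗[k] ↥(A.grading ((n : ℤ) + 1))) :
    C' A b t ⁅φ, y⁆ = - b.hi ⁅φ, br' A n t⁆ y := by
  induction t using TensorProduct.induction_on with
  | zero => simp
  | tmul v u =>
    rw [C'_tmul, br'_tmul]
    have hc : ⁅φ, (v : L)⁆ ∈ A.grading 0 :=
      grading_congr A (by ring) (A.lie_mem (-1) 1 φ hφ _ v.2)
    calc b.hi (u : L) ⁅⁅φ, y⁆, (v : L)⁆
        = b.hi (u : L) ⁅φ, ⁅y, (v : L)⁆⁆ - b.hi (u : L) ⁅y, ⁅φ, (v : L)⁆⁆ := by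
          rw [lie_lie, map_sub]
      _ = b.hi ⁅(v : L), ⁅(u : L), φ⁆⁆ y - b.hi ⁅⁅φ, (v : L)⁆, (u : L)⁆ y := by
          rw [b.hi_A φ hφ, ← b.hi_D _ v.2 ⁅(u : L), φ⁆ y]
          rw [show ⁅y, ⁅φ, (v : L)⁆⁆ = -⁅⁅φ, (v : L)⁆, y⁆ from by rw [lie_skew]]
          rw [map_neg, b.hi_g _ hc]
          ring
      _ = b.hi (⁅(v : L), ⁅(u : L), φ⁆⁆ - ⁅⁅φ, (v : L)⁆, (u : L)⁆) y := by
          rw [map_sub, LinearMap.sub_apply]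
      _ = - b.hi ⁅φ, ⁅(v : L), (u : L)⁆⁆ y := by
          rw [show ⁅(v:L), ⁅(u:L), φ⁆⁆ - ⁅⁅φ, (v:L)⁆, (u:L)⁆ = -⁅φ, ⁅(v:L), (u:L)⁆⁆ from by
            rw [leibniz_lie φ (v : L) (u : L)]
            rw [show ⁅(u:L), φ⁆ = -⁅φ, (u:L)⁆ from by rw [lie_skew]]
            rw [lie_neg, neg_add]
            abel]
          rw [map_neg, LinearMap.neg_apply]
  | add t t' ht ht' =>
    rw [map_add, map_add, LinearMap.add_apply, ht, ht', lie_add, map_add,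
      LinearMap.add_apply, neg_add]

lemma hker (b : Bundle A n) (t : ↥(A.grading 1) ⊗[k] ↥(A.grading ((n : ℤ) + 1)))
    (ht : br' A n t = 0) : C' A b t = 0 := by
  ext w
  rw [LinearMap.zero_apply]
  induction w using homog_induction A with
  | h0 => simp
  | hadd x y hx hy => rw [map_add, hx, hy, add_zero]
  | hmem m w hw =>
    rcases eq_or_ne m (-((n : ℤ) + 2)) with rfl | hm
    · have hw' : w ∈ A.grading (-((n : ℤ) + 1) - 1) := grading_congr A (by ring) hw
      rw [A.span_neg ((n : ℤ) + 1) (by omega)] at hw'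
      clear hw
      induction hw' using Submodule.span_induction with
      | mem x hx =>
        obtain ⟨φ, hφ, y, hy, rfl⟩ := hx
        rw [C'_key A b hφ y t, ht, lie_zero, map_zero, LinearMap.zero_apply, neg_zero]
      | zero => simp
      | add x y hx hy ihx ihy => rw [map_add, ihx, ihy, add_zero]
      | smul c x hx ihx => rw [map_smul, smul_eq_mul, ihx, mul_zero]
    · exact C'_vanish A b t hm hw

noncomputable def θstep (b : Bundle A n) : ↥(A.grading ((n : ℤ) + 2)) →ₗ[k] (L →ₗ[k] k) :=
  ((LinearMap.ker (br'' A n)).liftQ (C' A b) (by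
      intro t ht
      rw [LinearMap.mem_ker] at ht ⊢
      exact hker A b t (congrArg Subtype.val ht))).comp
    (LinearMap.quotKerEquivOfSurjective _ (br''_surj A)).symm.toLinearMap

lemma θstep_br'' (b : Bundle A n) (t : ↥(A.grading 1) ⊗[k] ↥(A.grading ((n : ℤ) + 1))) :
    θstep A b (br'' A n t) = C' A b t := by
  have h1 : (LinearMap.quotKerEquivOfSurjective _ (br''_surj A (n := n)))
      (Submodule.Quotient.mk t) = br'' A n t := rfl
  rw [θstep, LinearMap.comp_apply, LinearEquiv.coe_coe, ← h1, LinearEquiv.symm_apply_apply,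
    Submodule.liftQ_apply]

noncomputable def next (b : Bundle A n) : L →ₗ[k] L →ₗ[k] k :=
  (θstep A b).comp (π A ((n : ℤ) + 2))

lemma next_rel (b : Bundle A n) {v : L} (hv : v ∈ A.grading 1) (u y : L) :
    next A b ⁅v, u⁆ y = b.hi u ⁅y, v⁆ := by
  have hπ : π A ((n : ℤ) + 2) ⁅v, u⁆ = br'' A n (⟨v, hv⟩ ⊗ₜ π A ((n : ℤ) + 1) u) := by
    apply Subtype.ext
    show p A ((n : ℤ) + 2) ⁅v, u⁆ = _
    rw [p_lie_left A hv, show (n : ℤ) + 2 - 1 = (n : ℤ) + 1 from by ring]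
    rfl
  rw [next, LinearMap.comp_apply, hπ, θstep_br'', C'_tmul]
  show b.hi (p A ((n : ℤ) + 1) u) _ = _
  rw [b.hi_suppl]

lemma next_suppl (b : Bundle A n) (x z : L) :
    next A b (p A ((n : ℤ) + 2) x) z = next A b x z := by
  simp only [next, LinearMap.comp_apply]
  rw [π_congr A (p_idem A _ x)]

lemma next_suppr (b : Bundle A n) (x z : L) :
    next A b x (p A (-((n : ℤ) + 2)) z) = next A b x z := by
  obtain ⟨t, ht⟩ := br''_surj A (π A ((n : ℤ) + 2) x)
  simp only [next, LinearMap.comp_apply]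
  rw [← ht, θstep_br'']
  exact (C'_suppr A b t z).symm

lemma next_congr (b : Bundle A n) {x x' : L}
    (h : p A ((n : ℤ) + 2) x = p A ((n : ℤ) + 2) x') (z : L) :
    next A b x z = next A b x' z := by
  rw [← next_suppl A b x z, ← next_suppl A b x' z, h]

lemma next_g (b : Bundle A n) {c : L} (hc : c ∈ A.grading 0) (x z : L) :
    next A b x ⁅c, z⁆ = - next A b ⁅c, x⁆ z := by
  have key : ∀ x', x' ∈ A.grading ((n : ℤ) + 2) →
      next A b x' ⁅c, z⁆ = - next A b ⁅c, x'⁆ z := by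
    intro x' hx'
    have hmem' : x' ∈ A.grading (((n : ℤ) + 1) + 1) := grading_congr A (by ring) hx'
    rw [A.span_pos ((n : ℤ) + 1) (by omega)] at hmem'
    clear hx'
    induction hmem' using Submodule.span_induction with
    | mem w hw =>
      obtain ⟨v, hv, u, hu, rfl⟩ := hw
      have hcv : ⁅c, v⁆ ∈ A.grading 1 := grading_congr A (by ring) (A.lie_mem 0 1 c hc v hv)
      rw [next_rel A b hv, leibniz_lie c v u, map_add, LinearMap.add_apply,
        next_rel A b hcv, next_rel A b hv,
        show b.hi ⁅c, u⁆ ⁅z, v⁆ = - b.hi u ⁅c, ⁅z, v⁆⁆ from by rw [b.hi_g c hc, neg_neg],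
        lie_lie, map_sub]
      ring
    | zero => simp
    | add w w' hw hw' ihw ihw' =>
      rw [map_add, LinearMap.add_apply, ihw, ihw', lie_add, map_add, LinearMap.add_apply]
      ring
    | smul a w hw ihw =>
      rw [map_smul, LinearMap.smul_apply, ihw, lie_smul, map_smul, LinearMap.smul_apply,
        smul_eq_mul, smul_eq_mul]
      ring
  have h2 : next A b ⁅c, x⁆ z = next A b ⁅c, p A ((n : ℤ) + 2) x⁆ z :=
    next_congr A b (by rw [p_lie_left A hc, p_lie_left A hc, sub_zero, p_idem]) z
  rw [← next_suppl A b x, h2]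
  exact key _ (p_mem A _ x)

lemma next_A (b : Bundle A n) {φ : L} (hφ : φ ∈ A.grading (-1)) (x z : L) :
    next A b x ⁅φ, z⁆ = b.hi ⁅x, φ⁆ z := by
  have key : ∀ x', x' ∈ A.grading ((n : ℤ) + 2) →
      next A b x' ⁅φ, z⁆ = b.hi ⁅x', φ⁆ z := by
    intro x' hx'
    have hmem' : x' ∈ A.grading (((n : ℤ) + 1) + 1) := grading_congr A (by ring) hx'
    rw [A.span_pos ((n : ℤ) + 1) (by omega)] at hmem'
    clear hx'
    induction hmem' using Submodule.span_induction with
    | mem w hw =>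
      obtain ⟨v, hv, u, hu, rfl⟩ := hw
      have hc : ⁅v, φ⁆ ∈ A.grading 0 := grading_congr A (by ring) (A.lie_mem 1 (-1) v hv φ hφ)
      rw [next_rel A b hv, lie_lie v u φ, map_sub, LinearMap.sub_apply,
        b.hi_D v hv ⁅u, φ⁆ z, ← b.hi_A φ hφ u ⁅z, v⁆,
        show b.hi ⁅u, ⁅v, φ⁆⁆ z = b.hi u ⁅⁅v, φ⁆, z⁆ from by
          rw [show ⁅u, ⁅v, φ⁆⁆ = -⁅⁅v, φ⁆, u⁆ from by rw [lie_skew], map_neg,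
            LinearMap.neg_apply, b.hi_g _ hc],
        show ⁅⁅φ, z⁆, v⁆ = ⁅φ, ⁅z, v⁆⁆ - ⁅⁅v, φ⁆, z⁆ from by
          rw [lie_lie, show ⁅⁅v, φ⁆, z⁆ = -⁅z, ⁅v, φ⁆⁆ from by rw [lie_skew],
            show ⁅φ, (v : L)⁆ = -⁅v, φ⁆ from by rw [lie_skew], lie_neg]]
      exact map_sub _ _ _
    | zero => simp
    | add w w' hw hw' ihw ihw' =>
      rw [map_add, LinearMap.add_apply, ihw, ihw', add_lie, map_add, LinearMap.add_apply]
    | smul a w hw ihw =>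
      rw [map_smul, LinearMap.smul_apply, ihw, smul_lie, map_smul, LinearMap.smul_apply]
  have hp : p A ((n : ℤ) + 1) ⁅x, φ⁆ = p A ((n : ℤ) + 1) ⁅p A ((n : ℤ) + 2) x, φ⁆ := by
    rw [p_lie_right A hφ, p_lie_right A hφ,
      show (n : ℤ) + 1 - -1 = (n : ℤ) + 2 from by ring, p_idem]
  rw [← next_suppl A b x, ← b.hi_suppl ⁅x, φ⁆ z, hp, b.hi_suppl]
  exact key _ (p_mem A _ x)

/-- The inductive step for the tower of pairings. -/
noncomputable def bundleSucc (b : Bundle A n) : Bundle A (n + 1) where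
  lo := b.hi
  hi := next A b
  lo_suppl x z := by
    rw [show ((n + 1 : ℕ) : ℤ) = (n : ℤ) + 1 from by push_cast; ring]
    exact b.hi_suppl x z
  lo_suppr x z := by
    rw [show (-((n + 1 : ℕ) : ℤ)) = -((n : ℤ) + 1) from by push_cast; ring]
    exact b.hi_suppr x z
  hi_suppl x z := by
    rw [show (((n + 1 : ℕ) : ℤ) + 1) = (n : ℤ) + 2 from by push_cast; ring]
    exact next_suppl A b x z
  hi_suppr x z := by
    rw [show (-(((n + 1 : ℕ) : ℤ) + 1)) = -((n : ℤ) + 2) from by push_cast; ring]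
    exact next_suppr A b x z
  lo_g := b.hi_g
  hi_g c hc x z := next_g A b hc x z
  hi_A φ hφ x z := next_A A b hφ x z
  hi_D v hv x y := next_rel A b hv x y

end Step

/-- The tower of bundles. -/
noncomputable def bundle (hBsymm : ∀ a b : g, P.B a b = P.B b a) : ∀ n : ℕ, Bundle A n
  | 0 => bundle0 A hBsymm
  | n + 1 => bundleSucc A (bundle hBsymm n)

variable (hBsymm : ∀ a b : g, P.B a b = P.B b a)

/-- The level-`n` pairing. -/
noncomputable def Θ (n : ℕ) : L →ₗ[k] L →ₗ[k] k := (bundle A hBsymm n).lo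

lemma Θ_zero : Θ A hBsymm 0 = lo0 A := rfl

lemma Θ_one : Θ A hBsymm 1 = hi1 A := rfl

lemma Θ_succ_eq_hi (n : ℕ) : Θ A hBsymm (n + 1) = (bundle A hBsymm n).hi := rfl

lemma Θ_suppl (n : ℕ) (x z : L) : Θ A hBsymm n (p A (n : ℤ) x) z = Θ A hBsymm n x z :=
  (bundle A hBsymm n).lo_suppl x z

lemma Θ_suppr (n : ℕ) (x z : L) : Θ A hBsymm n x (p A (-(n : ℤ)) z) = Θ A hBsymm n x z :=
  (bundle A hBsymm n).lo_suppr x z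

lemma Θ_g (n : ℕ) {c : L} (hc : c ∈ A.grading 0) (x z : L) :
    Θ A hBsymm n x ⁅c, z⁆ = - Θ A hBsymm n ⁅c, x⁆ z :=
  (bundle A hBsymm n).lo_g c hc x z

lemma Θ_A (n : ℕ) {φ : L} (hφ : φ ∈ A.grading (-1)) (x z : L) :
    Θ A hBsymm (n + 1) x ⁅φ, z⁆ = Θ A hBsymm n ⁅x, φ⁆ z :=
  (bundle A hBsymm n).hi_A φ hφ x z

lemma Θ_D (n : ℕ) {v : L} (hv : v ∈ A.grading 1) (x y : L) :
    Θ A hBsymm (n + 1) ⁅v, x⁆ y = Θ A hBsymm n x ⁅y, v⁆ :=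
  (bundle A hBsymm n).hi_D v hv x y


/-- The component forms, assembled over `ℤ`. -/
noncomputable def Ξ : ∀ m : ℤ, ↥(A.grading m) →ₗ[k] (L →ₗ[k] k)
  | Int.ofNat m => (Θ A hBsymm m).comp (A.grading (Int.ofNat m)).subtype
  | Int.negSucc m => ((Θ A hBsymm (m + 1)).flip).comp (A.grading (Int.negSucc m)).subtype

/-- The global invariant bilinear form on `L`. -/
noncomputable def BL : L →ₗ[k] L →ₗ[k] k :=
  (DirectSum.toModule k ℤ (L →ₗ[k] k) (Ξ A hBsymm)).comp (D A).symm.toLinearMap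

lemma Dsymm_of_mem {m : ℤ} {x : L} (hx : x ∈ A.grading m) :
    (D A).symm x = DirectSum.lof k ℤ (fun i => ↥(A.grading i)) m ⟨x, hx⟩ := by
  apply (D A).injective
  rw [LinearEquiv.apply_symm_apply]
  show x = (D A) _
  show x = DirectSum.coeLinearMap A.grading (DirectSum.lof k ℤ (fun i => ↥(A.grading i)) m ⟨x, hx⟩)
  rw [DirectSum.lof_eq_of, DirectSum.coeLinearMap_of]

lemma BL_of_mem {m : ℤ} {x : L} (hx : x ∈ A.grading m) (y : L) :
    BL A hBsymm x y = Ξ A hBsymm m ⟨x, hx⟩ y := by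
  rw [BL, LinearMap.comp_apply, LinearEquiv.coe_coe, Dsymm_of_mem A hx,
    DirectSum.toModule_lof]

lemma BL_nonneg {m : ℕ} {x : L} (hx : x ∈ A.grading (m : ℤ)) (y : L) :
    BL A hBsymm x y = Θ A hBsymm m x y := by
  rw [BL_of_mem A hBsymm hx y]
  show Θ A hBsymm m x y = _
  rw [← Θ_suppl A hBsymm m x y, p_eq_self A hx]

lemma BL_negsucc {m : ℕ} {x : L} (hx : x ∈ A.grading (Int.negSucc m)) (y : L) :
    BL A hBsymm x y = Θ A hBsymm (m + 1) y x := by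
  rw [BL_of_mem A hBsymm hx y]
  rfl

lemma negSucc_mem {m : ℕ} {x : L} (hx : x ∈ A.grading (-((m : ℤ) + 1))) :
    x ∈ A.grading (Int.negSucc m) := grading_congr A (by rw [Int.negSucc_eq]) hx

lemma BL_ortho {a c : ℤ} (h : a + c ≠ 0) {x y : L}
    (hx : x ∈ A.grading a) (hy : y ∈ A.grading c) : BL A hBsymm x y = 0 := by
  cases a with
  | ofNat m =>
    rw [BL_nonneg A hBsymm (show x ∈ A.grading ((m : ℕ) : ℤ) from hx),
      ← Θ_suppr A hBsymm m x y,
      p_eq_zero A (show c ≠ -(m : ℤ) from by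
        simp only [Int.ofNat_eq_natCast] at h; omega) hy, map_zero]
  | negSucc m =>
    rw [BL_negsucc A hBsymm hx, ← Θ_suppl A hBsymm (m + 1) y x,
      p_eq_zero A (show c ≠ ((m + 1 : ℕ) : ℤ) from by
        rw [Int.negSucc_eq] at h; push_cast; omega) hy,
      map_zero, LinearMap.zero_apply]

lemma BL_symm (x y : L) : BL A hBsymm x y = BL A hBsymm y x := by
  induction x using homog_induction A with
  | h0 => simp
  | hadd x x' hx hx' => rw [map_add, LinearMap.add_apply, hx, hx', map_add]
  | hmem a x hxa =>
    induction y using homog_induction A with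
    | h0 => simp
    | hadd y y' hy hy' => rw [map_add, map_add, LinearMap.add_apply, hy, hy']
    | hmem c y hyc =>
      rcases eq_or_ne (a + c) 0 with hac | hac
      · cases a with
        | ofNat m =>
          cases m with
          | zero =>
            have hyc0 : y ∈ A.grading 0 := grading_congr A (by
              simp only [Int.ofNat_eq_natCast] at hac; omega) hyc
            rw [BL_nonneg A hBsymm (show x ∈ A.grading ((0 : ℕ) : ℤ) from hxa) y,
              BL_nonneg A hBsymm (show y ∈ A.grading ((0 : ℕ) : ℤ) from hyc0) x]
            exact hBsymm _ _
          | succ m' =>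
            have hyc' : y ∈ A.grading (Int.negSucc m') := by
              apply grading_congr A (show c = Int.negSucc m' from by
                simp only [Int.ofNat_eq_natCast] at hac
                rw [Int.negSucc_eq]; push_cast at hac ⊢; omega) hyc
            rw [BL_nonneg A hBsymm (show x ∈ A.grading (((m' + 1 : ℕ)) : ℤ) from hxa) y,
              BL_negsucc A hBsymm hyc' x]
        | negSucc m =>
          have hyc' : y ∈ A.grading (((m + 1 : ℕ)) : ℤ) := by
            apply grading_congr A (show c = ((m + 1 : ℕ) : ℤ) from by
              rw [Int.negSucc_eq] at hac; push_cast at hac ⊢; omega) hyc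
          rw [BL_negsucc A hBsymm hxa y, BL_nonneg A hBsymm hyc' x]
      · rw [BL_ortho A hBsymm hac hxa hyc,
          BL_ortho A hBsymm (show c + a ≠ 0 from by omega) hyc hxa]

lemma BL_restrict_g (a b' : g) : BL A hBsymm (A.ιg a) (A.ιg b') = P.B a b' := by
  rw [BL_nonneg A hBsymm (show A.ιg a ∈ A.grading ((0 : ℕ) : ℤ) from
    A.ιg_range ▸ LinearMap.mem_range_self _ a)]
  show lo0 A (A.ιg a) (A.ιg b') = _
  rw [lo0_apply, f0_ιg, f0_ιg]

lemma BL_restrict_pair (v : V) (w : W) :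
    BL A hBsymm (A.ιV v) (A.ιW w) = P.pair v w := by
  rw [BL_nonneg A hBsymm (show A.ιV v ∈ A.grading ((1 : ℕ) : ℤ) from
    A.ιV_range ▸ LinearMap.mem_range_self _ v)]
  show hi1 A (A.ιV v) (A.ιW w) = _
  rw [hi1_apply, f1_ιV, fm_ιW]

/-- Moving a `V₋₁`-element across, negative-side version. -/
lemma Θ_E (m : ℕ) {φ : L} (hφ : φ ∈ A.grading (-1)) (x z : L) :
    Θ A hBsymm (m + 2) z ⁅x, φ⁆ = Θ A hBsymm (m + 1) ⁅φ, z⁆ x := by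
  have key : ∀ z', z' ∈ A.grading ((m : ℤ) + 2) →
      Θ A hBsymm (m + 2) z' ⁅x, φ⁆ = Θ A hBsymm (m + 1) ⁅φ, z'⁆ x := by
    intro z' hz'
    have hmem' : z' ∈ A.grading (((m : ℤ) + 1) + 1) := grading_congr A (by ring) hz'
    rw [A.span_pos ((m : ℤ) + 1) (by omega)] at hmem'
    clear hz'
    induction hmem' using Submodule.span_induction with
    | mem w hw =>
      obtain ⟨v, hv, u, hu, rfl⟩ := hw
      have hc : ⁅φ, v⁆ ∈ A.grading 0 :=
        grading_congr A (by ring) (A.lie_mem (-1) 1 φ hφ v hv)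
      rw [Θ_D A hBsymm (m + 1) hv u ⁅x, φ⁆, leibniz_lie φ v u, map_add,
        LinearMap.add_apply,
        show Θ A hBsymm (m + 1) ⁅⁅φ, v⁆, u⁆ x
            = - Θ A hBsymm (m + 1) u ⁅⁅φ, v⁆, x⁆ from by
          rw [Θ_g A hBsymm (m + 1) hc u x, neg_neg],
        Θ_D A hBsymm m hv ⁅φ, u⁆ x,
        show ⁅φ, u⁆ = -⁅u, φ⁆ from by rw [lie_skew], map_neg, LinearMap.neg_apply,
        ← Θ_A A hBsymm m hφ u ⁅x, v⁆,
        show ⁅⁅x, φ⁆, v⁆ = -⁅⁅φ, v⁆, x⁆ - ⁅φ, ⁅x, v⁆⁆ from by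
          rw [lie_lie, show ⁅x, ⁅φ, v⁆⁆ = -⁅⁅φ, v⁆, x⁆ from by rw [lie_skew]],
        map_sub, map_neg]
      ring
    | zero => simp
    | add w w' hw hw' ihw ihw' =>
      rw [map_add, LinearMap.add_apply, ihw, ihw', lie_add, map_add, LinearMap.add_apply]
    | smul a w hw ihw =>
      rw [map_smul, LinearMap.smul_apply, ihw, lie_smul, map_smul, LinearMap.smul_apply]
  have h1 : Θ A hBsymm (m + 2) z ⁅x, φ⁆
      = Θ A hBsymm (m + 2) (p A ((m : ℤ) + 2) z) ⁅x, φ⁆ := by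
    rw [← Θ_suppl A hBsymm (m + 2) z,
      show (((m + 2 : ℕ)) : ℤ) = (m : ℤ) + 2 from by push_cast; ring]
  have hpp : p A ((m : ℤ) + 1) ⁅φ, z⁆ = p A ((m : ℤ) + 1) ⁅φ, p A ((m : ℤ) + 2) z⁆ := by
    rw [p_lie_left A hφ, p_lie_left A hφ,
      show (m : ℤ) + 1 - -1 = (m : ℤ) + 2 from by ring, p_idem]
  have h2 : Θ A hBsymm (m + 1) ⁅φ, z⁆ x
      = Θ A hBsymm (m + 1) ⁅φ, p A ((m : ℤ) + 2) z⁆ x := by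
    rw [← Θ_suppl A hBsymm (m + 1) ⁅φ, z⁆ x,
      ← Θ_suppl A hBsymm (m + 1) ⁅φ, p A ((m : ℤ) + 2) z⁆ x,
      show (((m + 1 : ℕ)) : ℤ) = (m : ℤ) + 1 from by push_cast; ring, hpp]
  rw [h1, h2]
  exact key _ (p_mem A _ z)

lemma inv0_hom {c : L} (hc : c ∈ A.grading 0) {a : ℤ} {x : L} (hx : x ∈ A.grading a)
    (z : L) : BL A hBsymm ⁅x, c⁆ z = BL A hBsymm x ⁅c, z⁆ := by
  have hxc : ⁅x, c⁆ ∈ A.grading a := grading_congr A (by ring) (A.lie_mem a 0 x hx c hc)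
  cases a with
  | ofNat m =>
    rw [BL_nonneg A hBsymm (show ⁅x, c⁆ ∈ A.grading ((m : ℕ) : ℤ) from hxc) z,
      BL_nonneg A hBsymm (show x ∈ A.grading ((m : ℕ) : ℤ) from hx) ⁅c, z⁆,
      Θ_g A hBsymm m hc x z,
      show ⁅x, c⁆ = -⁅c, x⁆ from by rw [lie_skew], map_neg, LinearMap.neg_apply]
  | negSucc m =>
    rw [BL_negsucc A hBsymm hxc z, BL_negsucc A hBsymm hx ⁅c, z⁆,
      show Θ A hBsymm (m + 1) ⁅c, z⁆ x = - Θ A hBsymm (m + 1) z ⁅c, x⁆ from by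
        rw [Θ_g A hBsymm (m + 1) hc z x, neg_neg],
      show ⁅x, c⁆ = -⁅c, x⁆ from by rw [lie_skew], map_neg]

lemma invV_hom {v : L} (hv : v ∈ A.grading 1) {a : ℤ} {x : L} (hx : x ∈ A.grading a)
    (z : L) : BL A hBsymm ⁅x, v⁆ z = BL A hBsymm x ⁅v, z⁆ := by
  have hxv : ⁅x, v⁆ ∈ A.grading (a + 1) := A.lie_mem a 1 x hx v hv
  cases a with
  | ofNat m =>
    have hxv' : ⁅x, v⁆ ∈ A.grading (((m + 1 : ℕ)) : ℤ) :=
      grading_congr A (by simp only [Int.ofNat_eq_natCast]; push_cast; ring) hxv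
    rw [BL_nonneg A hBsymm hxv' z,
      BL_nonneg A hBsymm (show x ∈ A.grading ((m : ℕ) : ℤ) from hx) ⁅v, z⁆,
      show ⁅x, v⁆ = -⁅v, x⁆ from by rw [lie_skew], map_neg, LinearMap.neg_apply,
      Θ_D A hBsymm m hv x z,
      show ⁅v, z⁆ = -⁅z, v⁆ from by rw [lie_skew], map_neg]
  | negSucc m =>
    cases m with
    | zero =>
      have hx' : x ∈ A.grading (-1) := grading_congr A (by rw [Int.negSucc_eq]; ring) hx
      have hxv0 : ⁅x, v⁆ ∈ A.grading ((0 : ℕ) : ℤ) :=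
        grading_congr A (by rw [Int.negSucc_eq]; ring) hxv
      rw [BL_nonneg A hBsymm hxv0 z, BL_negsucc A hBsymm hx ⁅v, z⁆]
      show lo0 A ⁅x, v⁆ z = hi1 A ⁅v, z⁆ x
      rw [lo0_apply, hi1_apply, f0_lie_yv A hv x, f1_lie_v A hv z, map_neg,
        LinearMap.neg_apply, map_neg, LinearMap.neg_apply, hBsymm, P.Φ_compat]
    | succ m' =>
      have hxv' : ⁅x, v⁆ ∈ A.grading (Int.negSucc m') :=
        grading_congr A (by rw [Int.negSucc_eq, Int.negSucc_eq]; push_cast; ring) hxv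
      rw [BL_negsucc A hBsymm hxv' z, BL_negsucc A hBsymm hx ⁅v, z⁆,
        Θ_D A hBsymm (m' + 1) hv z x]

lemma invW_hom {φ : L} (hφ : φ ∈ A.grading (-1)) {a : ℤ} {x : L} (hx : x ∈ A.grading a)
    (z : L) : BL A hBsymm ⁅x, φ⁆ z = BL A hBsymm x ⁅φ, z⁆ := by
  have hxφ : ⁅x, φ⁆ ∈ A.grading (a + -1) := A.lie_mem a (-1) x hx φ hφ
  cases a with
  | ofNat m =>
    cases m with
    | zero =>
      have hx' : x ∈ A.grading 0 := hx
      have hxφ' : ⁅x, φ⁆ ∈ A.grading (Int.negSucc 0) :=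
        grading_congr A (by rw [Int.negSucc_eq]; ring) hxφ
      rw [BL_negsucc A hBsymm hxφ' z,
        BL_nonneg A hBsymm (show x ∈ A.grading ((0 : ℕ) : ℤ) from hx') ⁅φ, z⁆]
      show hi1 A z ⁅x, φ⁆ = lo0 A x ⁅φ, z⁆
      rw [hi1_apply, lo0_apply, fm_lie_g A hx',
        show ⁅φ, z⁆ = -⁅z, φ⁆ from by rw [lie_skew], map_neg, f0_lie_xm A hφ z,
        map_neg, P.Φ_compat, P.pair_compat, neg_neg]
    | succ m' =>
      have hxφ' : ⁅x, φ⁆ ∈ A.grading ((m' : ℕ) : ℤ) :=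
        grading_congr A (by simp only [Int.ofNat_eq_natCast]; push_cast; ring) hxφ
      rw [BL_nonneg A hBsymm (show x ∈ A.grading (((m' + 1 : ℕ)) : ℤ) from hx) ⁅φ, z⁆,
        Θ_A A hBsymm m' hφ x z, BL_nonneg A hBsymm hxφ' z]
  | negSucc m =>
    have hxφ' : ⁅x, φ⁆ ∈ A.grading (Int.negSucc (m + 1)) :=
      grading_congr A (by rw [Int.negSucc_eq, Int.negSucc_eq]; push_cast; ring) hxφ
    rw [BL_negsucc A hBsymm hxφ' z, BL_negsucc A hBsymm hx ⁅φ, z⁆,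
      Θ_E A hBsymm m hφ x z]

lemma inv0_all {c : L} (hc : c ∈ A.grading 0) (x z : L) :
    BL A hBsymm ⁅x, c⁆ z = BL A hBsymm x ⁅c, z⁆ := by
  induction x using homog_induction A with
  | h0 => simp
  | hadd x x' hx hx' => rw [add_lie, map_add, LinearMap.add_apply, hx, hx', map_add,
      LinearMap.add_apply]
  | hmem a x hx => exact inv0_hom A hBsymm hc hx z

lemma invV_all {v : L} (hv : v ∈ A.grading 1) (x z : L) :
    BL A hBsymm ⁅x, v⁆ z = BL A hBsymm x ⁅v, z⁆ := by
  induction x using homog_induction A with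
  | h0 => simp
  | hadd x x' hx hx' => rw [add_lie, map_add, LinearMap.add_apply, hx, hx', map_add,
      LinearMap.add_apply]
  | hmem a x hx => exact invV_hom A hBsymm hv hx z

lemma invW_all {φ : L} (hφ : φ ∈ A.grading (-1)) (x z : L) :
    BL A hBsymm ⁅x, φ⁆ z = BL A hBsymm x ⁅φ, z⁆ := by
  induction x using homog_induction A with
  | h0 => simp
  | hadd x x' hx hx' => rw [add_lie, map_add, LinearMap.add_apply, hx, hx', map_add,
      LinearMap.add_apply]
  | hmem a x hx => exact invW_hom A hBsymm hφ hx z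

lemma inv_mid : ∀ (nn : ℕ) (b : ℤ), b.natAbs ≤ nn → ∀ y ∈ A.grading b, ∀ x z : L,
    BL A hBsymm ⁅x, y⁆ z = BL A hBsymm x ⁅y, z⁆ := by
  intro nn
  induction nn with
  | zero =>
    intro b hb y hy x z
    have hb0 : b = 0 := by omega
    exact inv0_all A hBsymm (hb0 ▸ hy) x z
  | succ nn ih =>
    intro b hb y hy x z
    rcases le_or_gt b.natAbs nn with h | h
    · exact ih b h y hy x z
    have hb' : b.natAbs = nn + 1 := by omega
    cases nn with
    | zero =>
      -- b = 1 or b = -1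
      rcases Int.natAbs_eq b with he | he
      · rw [hb'] at he
        exact invV_all A hBsymm (show y ∈ A.grading 1 from by
          rw [← show b = 1 from by omega]; exact hy) x z
      · rw [hb'] at he
        exact invW_all A hBsymm (show y ∈ A.grading (-1) from by
          rw [← show b = -1 from by omega]; exact hy) x z
    | succ nn' =>
      -- |b| = nn' + 2 ≥ 2
      rcases Int.natAbs_eq b with he | he
      · -- positive case
        have hy' : y ∈ A.grading (((nn' : ℤ) + 1) + 1) := by
          apply grading_congr A (show b = ((nn' : ℤ) + 1) + 1 from by
            rw [he, hb']; push_cast; ring) hy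
        rw [A.span_pos ((nn' : ℤ) + 1) (by omega)] at hy'
        clear hy hb hb' he h
        induction hy' using Submodule.span_induction with
        | mem w hw =>
          obtain ⟨v, hv, y', hy', rfl⟩ := hw
          have ihy' : ∀ x' z' : L, BL A hBsymm ⁅x', y'⁆ z' = BL A hBsymm x' ⁅y', z'⁆ :=
            fun x' z' => ih ((nn' : ℤ) + 1) (by omega) y' hy' x' z'
          rw [leibniz_lie x v y', map_add, LinearMap.add_apply,
            ihy' ⁅x, v⁆ z, invV_all A hBsymm hv x ⁅y', z⁆,
            show BL A hBsymm ⁅v, ⁅x, y'⁆⁆ z = - BL A hBsymm x ⁅y', ⁅v, z⁆⁆ from by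
              rw [show ⁅v, ⁅x, y'⁆⁆ = -⁅⁅x, y'⁆, v⁆ from by rw [lie_skew], map_neg,
                LinearMap.neg_apply, invV_all A hBsymm hv ⁅x, y'⁆ z, ihy' x ⁅v, z⁆],
            lie_lie v y' z, map_sub]
          ring
        | zero => simp
        | add w w' hw hw' ihw ihw' =>
          rw [lie_add, map_add, LinearMap.add_apply, ihw, ihw', add_lie, map_add]
        | smul a w hw ihw =>
          rw [lie_smul, map_smul, LinearMap.smul_apply, ihw, smul_lie, map_smul]
      · -- negative case
        have hy' : y ∈ A.grading (-((nn' : ℤ) + 1) - 1) := by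
          apply grading_congr A (show b = -((nn' : ℤ) + 1) - 1 from by
            rw [he, hb']; push_cast; ring) hy
        rw [A.span_neg ((nn' : ℤ) + 1) (by omega)] at hy'
        clear hy hb hb' he h
        induction hy' using Submodule.span_induction with
        | mem w hw =>
          obtain ⟨φ, hφ, y', hy', rfl⟩ := hw
          have ihy' : ∀ x' z' : L, BL A hBsymm ⁅x', y'⁆ z' = BL A hBsymm x' ⁅y', z'⁆ :=
            fun x' z' => ih (-((nn' : ℤ) + 1)) (by omega) y' hy' x' z'
          rw [leibniz_lie x φ y', map_add, LinearMap.add_apply,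
            ihy' ⁅x, φ⁆ z, invW_all A hBsymm hφ x ⁅y', z⁆,
            show BL A hBsymm ⁅φ, ⁅x, y'⁆⁆ z = - BL A hBsymm x ⁅y', ⁅φ, z⁆⁆ from by
              rw [show ⁅φ, ⁅x, y'⁆⁆ = -⁅⁅x, y'⁆, φ⁆ from by rw [lie_skew], map_neg,
                LinearMap.neg_apply, invW_all A hBsymm hφ ⁅x, y'⁆ z, ihy' x ⁅φ, z⁆],
            lie_lie φ y' z, map_sub]
          ring
        | zero => simp
        | add w w' hw hw' ihw ihw' =>
          rw [lie_add, map_add, LinearMap.add_apply, ihw, ihw', add_lie, map_add]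
        | smul a w hw ihw =>
          rw [lie_smul, map_smul, LinearMap.smul_apply, ihw, smul_lie, map_smul]

lemma BL_inv (x y z : L) : BL A hBsymm ⁅x, y⁆ z = BL A hBsymm x ⁅y, z⁆ := by
  induction y using homog_induction A with
  | h0 => simp
  | hadd y y' hy hy' => rw [lie_add, map_add, LinearMap.add_apply, hy, hy', add_lie,
      map_add]
  | hmem b y hy => exact inv_mid A hBsymm b.natAbs b le_rfl y hy x z

lemma BL_fst_p {c : ℤ} {y : L} (hy : y ∈ A.grading c) (x : L) :
    BL A hBsymm x y = BL A hBsymm (p A (-c) x) y := by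
  induction x using homog_induction A with
  | h0 => simp
  | hadd x x' hx hx' => rw [map_add, LinearMap.add_apply, hx, hx', map_add, map_add,
      LinearMap.add_apply]
  | hmem a x hx =>
    rcases eq_or_ne a (-c) with rfl | ha
    · rw [p_eq_self A hx]
    · rw [BL_ortho A hBsymm (show a + c ≠ 0 from by omega) hx hy, p_eq_zero A ha hx,
        map_zero, LinearMap.zero_apply]

lemma nondeg_level : ∀ m : ℕ,
    (∀ x ∈ A.grading ((m : ℕ) : ℤ), (∀ y : L, BL A hBsymm x y = 0) → x = 0) ∧
    (∀ x ∈ A.grading (-((m : ℕ) : ℤ)), (∀ y : L, BL A hBsymm x y = 0) → x = 0) := by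
  intro m
  induction m with
  | zero =>
    constructor
    · intro x hx hzero
      have hf : f0 A x = 0 := P.B_nondeg_left _ (fun b' => by
        have := hzero (A.ιg b')
        rwa [BL_nonneg A hBsymm (show x ∈ A.grading ((0 : ℕ) : ℤ) from hx),
          show Θ A hBsymm 0 x (A.ιg b') = P.B (f0 A x) (f0 A (A.ιg b')) from rfl,
          f0_ιg] at this)
      rw [← mem_g0 A (show x ∈ A.grading 0 from hx), hf, map_zero]
    · intro x hx hzero
      have hx0 : x ∈ A.grading ((0 : ℕ) : ℤ) := grading_congr A (by ring) hx
      have hf : f0 A x = 0 := P.B_nondeg_left _ (fun b' => by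
        have := hzero (A.ιg b')
        rwa [BL_nonneg A hBsymm hx0,
          show Θ A hBsymm 0 x (A.ιg b') = P.B (f0 A x) (f0 A (A.ιg b')) from rfl,
          f0_ιg] at this)
      rw [← mem_g0 A (show x ∈ A.grading 0 from hx0), hf, map_zero]
  | succ m ih =>
    cases m with
    | zero =>
      constructor
      · intro x hx hzero
        have hf : f1 A x = 0 := P.pair_nondeg_left _ (fun w => by
          have := hzero (A.ιW w)
          rwa [BL_nonneg A hBsymm (show x ∈ A.grading ((1 : ℕ) : ℤ) from hx),
            show Θ A hBsymm 1 x (A.ιW w) = P.pair (f1 A x) (fm A (A.ιW w)) from rfl,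
            fm_ιW] at this)
        rw [← mem_g1 A (show x ∈ A.grading 1 from hx), hf, map_zero]
      · intro x hx hzero
        have hx1 : x ∈ A.grading (Int.negSucc 0) :=
          grading_congr A (by simp [Int.negSucc_eq]) hx
        have hf : fm A x = 0 := P.pair_nondeg_right _ (fun v => by
          have := hzero (A.ιV v)
          rwa [BL_negsucc A hBsymm hx1,
            show Θ A hBsymm 1 (A.ιV v) x = P.pair (f1 A (A.ιV v)) (fm A x) from rfl,
            f1_ιV] at this)
        rw [← mem_gm A (show x ∈ A.grading (-1) from by
          apply grading_congr A (by norm_num) hx), hf, map_zero]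
    | succ m' =>
      constructor
      · intro x hx hzero
        apply A.trans_pos (((m' + 2 : ℕ)) : ℤ) (by push_cast; omega) x hx
        intro φ hφ
        have hmem : ⁅x, φ⁆ ∈ A.grading (((m' + 1 : ℕ)) : ℤ) :=
          grading_congr A (by push_cast; ring)
            (A.lie_mem (((m' + 2 : ℕ)) : ℤ) (-1) x hx φ hφ)
        exact ih.1 ⁅x, φ⁆ hmem (fun y => by
          rw [invW_all A hBsymm hφ x y]; exact hzero ⁅φ, y⁆)
      · intro x hx hzero
        have hx' : x ∈ A.grading (-(((m' + 2 : ℕ)) : ℤ)) := hx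
        apply A.trans_neg (((m' + 2 : ℕ)) : ℤ) (by push_cast; omega) x hx'
        intro v hv
        have hmem : ⁅x, v⁆ ∈ A.grading (-(((m' + 1 : ℕ)) : ℤ)) :=
          grading_congr A (by push_cast; ring)
            (A.lie_mem (-(((m' + 2 : ℕ)) : ℤ)) 1 x hx' v hv)
        exact ih.2 ⁅x, v⁆ hmem (fun y => by
          rw [invV_all A hBsymm hv x y]; exact hzero ⁅v, y⁆)

lemma BL_nondeg (x : L) (hx : ∀ y : L, BL A hBsymm x y = 0) : x = 0 := by
  have hcomp : ∀ m : ℤ, p A m x = 0 := by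
    intro m
    have hmem := p_mem A m x
    have hzero : ∀ y : L, BL A hBsymm (p A m x) y = 0 := by
      intro y
      induction y using homog_induction A with
      | h0 => simp
      | hadd y y' hy hy' => rw [map_add, hy, hy', add_zero]
      | hmem c y hy =>
        rcases eq_or_ne (m + c) 0 with hc | hc
        · have := BL_fst_p A hBsymm hy x
          rw [show -c = m from by omega] at this
          rw [← this, hx y]
        · exact BL_ortho A hBsymm hc hmem hy
    cases m with
    | ofNat m' =>
      exact (nondeg_level A hBsymm m').1 (p A (Int.ofNat m') x)
        (grading_congr A (by simp [Int.ofNat_eq_natCast]) hmem) hzero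
    | negSucc m' =>
      exact (nondeg_level A hBsymm (m' + 1)).2 (p A (Int.negSucc m') x)
        (grading_congr A (by rw [Int.negSucc_eq]; push_cast; ring) hmem) hzero
  apply (D A).symm.injective
  rw [map_zero]
  refine DFinsupp.ext fun m => ?_
  have h1 : (((D A).symm x) m : L) = p A m x := rfl
  apply Subtype.ext
  rw [h1, hcomp m]
  rfl

end S8


/-- Let `(g, ρ, V, 𝒱, B₀)` be a standard pentad with `B₀` symmetric.  Then
there exists a non-degenerate symmetric invariant bilinear form `B_L` on the associated graded
Lie algebra `L(g,ρ,V,𝒱,B₀) = ⊕ₙ Vₙ` such that `B_L` restricted to `V₀ × V₀` equals `B₀`,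
`B_L(v, φ) = φ(v)` for `v ∈ V₁ = V` and `φ ∈ V₋₁ = 𝒱`, and `B_L(Vₙ, Vₘ) = 0` whenever
`n + m ≠ 0`. -/
theorem statement8
    {k g V W L : Type*} [Field k] [LieRing g] [LieAlgebra k g]
    [AddCommGroup V] [Module k V] [AddCommGroup W] [Module k W]
    [LieRing L] [LieAlgebra k L]
    (P : PentadStruct k g V W)
    (hBsymm : ∀ a b : g, P.B a b = P.B b a)
    (A : AssocGradedLieAlgebra k g V W P L) :
    ∃ BL : L →ₗ[k] L →ₗ[k] k,
      -- non-degenerate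
      (∀ x : L, (∀ y : L, BL x y = 0) → x = 0)
      -- symmetric
      ∧ (∀ x y : L, BL x y = BL y x)
      -- invariant
      ∧ (∀ x y z : L, BL ⁅x, y⁆ z = BL x ⁅y, z⁆)
      -- restriction to `V₀ × V₀` is `B₀`
      ∧ (∀ a b : g, BL (A.ιg a) (A.ιg b) = P.B a b)
      -- restriction to `V₁ × V₋₁` is the canonical pairing `(v, φ) ↦ φ(v)`
      ∧ (∀ (v : V) (w : W), BL (A.ιV v) (A.ιW w) = P.pair v w)
      -- `B_L(Vₙ, Vₘ) = 0` for `n + m ≠ 0`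
      ∧ (∀ n m : ℤ, n + m ≠ 0 → ∀ x ∈ A.grading n, ∀ y ∈ A.grading m, BL x y = 0) := by
  refine ⟨S8.BL A hBsymm, S8.BL_nondeg A hBsymm, S8.BL_symm A hBsymm,
    fun x y z => S8.BL_inv A hBsymm x y z, S8.BL_restrict_g A hBsymm,
    S8.BL_restrict_pair A hBsymm, fun n m h x hx y hy => S8.BL_ortho A hBsymm h hx hy⟩
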